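/- arXiv:2603.02822 — 3 statements merged into one kernel-verified Lean document; each statement's English description precedes it below -/
import Mathlib

section
/- A near-isometry T on H is a shift operator if and only if T is unitarily equivalent to an operator-valued weighted shift S on H²_{ker T*}(𝔻) whose weight sequence {T_n} consists of invertible operators on ker T* that are uniformly bounded below and are contractions. -/
open ContinuousLinearMap

/-- Near-isometry: bounded-below contraction with `T*ⁿ Tⁿ⁺¹ H ⊆ T H` for all `n`. -/
def IsNearIsometry {K : Type*} [NormedAddCommGroup K] [InnerProductSpace ℂ K]
    [CompleteSpace K] (T : K →L[ℂ] K) : Prop :=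
  (∃ δ > (0 : ℝ), ∀ x : K, δ * ‖x‖ ≤ ‖T x‖ ∧ ‖T x‖ ≤ ‖x‖) ∧
  ∀ n : ℕ, ∀ x : K, ∃ y : K, ((adjoint T) ^ n) ((T ^ (n + 1)) x) = T y

/-- `T` is a shift operator: there is a closed wandering subspace `W` with
`H = ⊕_{n ≥ 0} Tⁿ W`. -/
def IsShift {K : Type*} [NormedAddCommGroup K] [InnerProductSpace ℂ K]
    (T : K →L[ℂ] K) : Prop :=
  ∃ W : Submodule ℂ K, IsClosed (W : Set K) ∧
    (∀ i j : ℕ, i ≠ j → ∀ x ∈ W, ∀ y ∈ W, (inner ℂ ((T ^ i) x) ((T ^ j) y) : ℂ) = 0) ∧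
    (⨆ n : ℕ, W.map (T ^ n).toLinearMap).topologicalClosure = ⊤

set_option maxHeartbeats 1000000
set_option synthInstance.maxHeartbeats 400000

noncomputable section AuxStmt5

local notation "⟪" x ", " y "⟫" => @inner ℂ _ _ x y

variable {W H' : Type*} [NormedAddCommGroup W] [InnerProductSpace ℂ W] [CompleteSpace W]
  [NormedAddCommGroup H'] [InnerProductSpace ℂ H'] [CompleteSpace H']

private lemma exists_isometry_of_bddBelow (C : W →L[ℂ] H') {δ : ℝ} (hδ : 0 < δ)
    (hlow : ∀ x, δ * ‖x‖ ≤ ‖C x‖) :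
    ∃ (A Ainv : W →L[ℂ] W) (V : W →ₗᵢ[ℂ] H'),
      (∀ x, V x = C (Ainv x)) ∧ (∀ x, A (Ainv x) = x) ∧ (∀ x, Ainv (A x) = x) ∧
      (∀ x, ‖A x‖ = ‖C x‖) ∧ IsUnit A ∧ IsUnit Ainv ∧
      Set.range V = Set.range C := by
  set B : W →L[ℂ] W := (adjoint C) ∘L C with hBdef
  have hBapp : ∀ x, B x = adjoint C (C x) := fun x => rfl
  have hBinner : ∀ x, ⟪B x, x⟫ = ⟪C x, C x⟫ := fun x => adjoint_inner_left C x (C x)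
  have hBsa : IsSelfAdjoint B := by
    rw [ContinuousLinearMap.isSelfAdjoint_iff', hBdef, ContinuousLinearMap.adjoint_comp,
      ContinuousLinearMap.adjoint_adjoint]
  have hBpos : 0 ≤ B := by
    rw [ContinuousLinearMap.nonneg_iff_isPositive]
    refine ⟨hBsa.isSymmetric, fun x => ?_⟩
    rw [ContinuousLinearMap.reApplyInnerSelf_apply, hBinner x, inner_self_eq_norm_sq]
    positivity
  have hBnorm : ∀ x, ‖⟪B x, x⟫‖ = ‖C x‖ ^ 2 := by
    intro x
    rw [hBinner x, inner_self_eq_norm_sq_to_K]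
    simp [norm_pow, RCLike.norm_ofReal, sq_abs]
  have hBlow : ∀ x, δ ^ 2 * ‖x‖ ≤ ‖B x‖ := by
    intro x
    rcases eq_or_lt_of_le (norm_nonneg x) with h0 | h0
    · rw [← h0, mul_zero]; exact norm_nonneg _
    · have h3 : ‖C x‖ ^ 2 ≤ ‖B x‖ * ‖x‖ := by
        rw [← hBnorm x]
        exact norm_inner_le_norm (𝕜 := ℂ) (B x) x
      have h4 : δ * ‖x‖ ≤ ‖C x‖ := hlow x
      have h5 : (δ * ‖x‖) ^ 2 ≤ ‖C x‖ ^ 2 := by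
        apply sq_le_sq' _ h4
        nlinarith [norm_nonneg x, hδ.le]
      have h6 : δ ^ 2 * ‖x‖ * ‖x‖ ≤ ‖B x‖ * ‖x‖ := by nlinarith
      exact le_of_mul_le_mul_right h6 h0
  have hBinj : Function.Injective B := by
    intro a b hab
    have h1 : B (a - b) = 0 := by rw [map_sub, hab, sub_self]
    have h2 := hBlow (a - b)
    rw [h1, norm_zero] at h2
    have h3 : ‖a - b‖ = 0 := by
      by_contra hc
      have hp : 0 < ‖a - b‖ := lt_of_le_of_ne (norm_nonneg _) (Ne.symm hc)
      have := mul_pos (pow_pos hδ 2) hp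
      linarith
    rwa [norm_eq_zero, sub_eq_zero] at h3
  have hBclosed : IsClosed ((LinearMap.range (B : W →ₗ[ℂ] W) : Submodule ℂ W) : Set W) := by
    have hal : AntilipschitzWith (Real.toNNReal ((δ ^ 2)⁻¹)) B := by
      apply ContinuousLinearMap.antilipschitz_of_bound
      intro x
      rw [Real.coe_toNNReal _ (by positivity)]
      rw [le_inv_mul_iff₀ (by positivity)]
      exact hBlow x
    have h := hal.isClosed_range B.uniformContinuous
    rwa [LinearMap.coe_range]
  haveI : CompleteSpace (↥(LinearMap.range (B : W →ₗ[ℂ] W) : Submodule ℂ W)) := hBclosed.completeSpace_coe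
  have hRbot : ((LinearMap.range (B : W →ₗ[ℂ] W) : Submodule ℂ W))ᗮ = ⊥ := by
    rw [Submodule.eq_bot_iff]
    intro y hy
    have h0 : ⟪B y, y⟫ = 0 := hy (B y) (LinearMap.mem_range_self _ y)
    have h1 : ⟪C y, C y⟫ = 0 := by rw [← hBinner y]; exact h0
    have hCy : C y = 0 := inner_self_eq_zero.mp h1
    have h2 := hlow y
    rw [hCy, norm_zero] at h2
    have h3 : ‖y‖ = 0 := by
      by_contra hc
      have hp : 0 < ‖y‖ := lt_of_le_of_ne (norm_nonneg _) (Ne.symm hc)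
      have := mul_pos hδ hp
      linarith
    exact norm_eq_zero.mp h3
  have hBsurj : Function.Surjective B := by
    change Function.Surjective (B : W →ₗ[ℂ] W)
    rw [← LinearMap.range_eq_top]
    exact Submodule.orthogonal_eq_bot_iff.mp hRbot
  have hBu : IsUnit B := ContinuousLinearMap.isUnit_iff_bijective.mpr ⟨hBinj, hBsurj⟩
  -- the square root
  set A : W →L[ℂ] W := CFC.sqrt B with hAdef
  have hApos : 0 ≤ A := CFC.sqrt_nonneg B
  have hAA : A * A = B := CFC.sqrt_mul_sqrt_self B hBpos
  have hAsa : IsSelfAdjoint A := IsSelfAdjoint.of_nonneg hApos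
  have hAadj : adjoint A = A := (ContinuousLinearMap.isSelfAdjoint_iff').mp hAsa
  have hAnorm : ∀ x, ‖A x‖ = ‖C x‖ := by
    intro x
    have h1 : ⟪A x, A x⟫ = ⟪C x, C x⟫ := by
      calc ⟪A x, A x⟫ = ⟪adjoint A (A x), x⟫ := (adjoint_inner_left A x (A x)).symm
        _ = ⟪A (A x), x⟫ := by rw [hAadj]
        _ = ⟪B x, x⟫ := by rw [← hAA]; rfl
        _ = ⟪C x, C x⟫ := hBinner x
    rw [inner_self_eq_norm_sq_to_K, inner_self_eq_norm_sq_to_K] at h1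
    have h2 : (‖A x‖ : ℝ) ^ 2 = ‖C x‖ ^ 2 := by exact_mod_cast h1
    calc ‖A x‖ = Real.sqrt (‖A x‖ ^ 2) := (Real.sqrt_sq (norm_nonneg _)).symm
      _ = Real.sqrt (‖C x‖ ^ 2) := by rw [h2]
      _ = ‖C x‖ := Real.sqrt_sq (norm_nonneg _)
  -- A is a unit
  have hAcommB : Commute A B := by
    rw [← hAA]
    exact (Commute.refl A).mul_right (Commute.refl A)
  have hAu : IsUnit A := by
    obtain ⟨u, hu⟩ := hBu
    have hcomm : Commute A ↑u⁻¹ := (hu ▸ hAcommB).units_inv_right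
    refine ⟨⟨A, ↑u⁻¹ * A, ?_, ?_⟩, rfl⟩
    · rw [← hcomm.eq, ← mul_assoc, hAA, ← hu, u.mul_inv]
    · rw [mul_assoc, hAA, ← hu, u.inv_mul]
  set Ainv : W →L[ℂ] W := ↑hAu.unit⁻¹ with hAinvdef
  have hADid : ∀ x, A (Ainv x) = x := by
    intro x
    have h : A * Ainv = 1 := hAu.mul_val_inv
    calc A (Ainv x) = (A * Ainv) x := rfl
      _ = x := by rw [h]; rfl
  have hDAid : ∀ x, Ainv (A x) = x := by
    intro x
    have h : Ainv * A = 1 := hAu.val_inv_mul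
    calc Ainv (A x) = (Ainv * A) x := rfl
      _ = x := by rw [h]; rfl
  have hAinvu : IsUnit Ainv := hAu.unit⁻¹.isUnit
  have hAinvsurj : Function.Surjective Ainv := fun y => ⟨A y, hDAid y⟩
  refine ⟨A, Ainv, ⟨(C.comp Ainv).toLinearMap, fun x => ?_⟩, fun x => rfl, hADid, hDAid,
    hAnorm, hAu, hAinvu, ?_⟩
  · show ‖C (Ainv x)‖ = ‖x‖
    rw [← hAnorm (Ainv x), hADid x]
  · show Set.range (⇑C ∘ ⇑Ainv) = Set.range ⇑C
    exact hAinvsurj.range_comp ⇑C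

private lemma pow_bddBelow' {H : Type*} [NormedAddCommGroup H] [InnerProductSpace ℂ H]
    (T : H →L[ℂ] H) {δ : ℝ} (hδ : 0 ≤ δ) (hb : ∀ x, δ * ‖x‖ ≤ ‖T x‖) :
    ∀ (n : ℕ) (x : H), δ ^ n * ‖x‖ ≤ ‖(T ^ n) x‖ := by
  intro n
  induction n with
  | zero => intro x; simp
  | succ n ih =>
    intro x
    have h1 : (T ^ (n + 1)) x = T ((T ^ n) x) := by
      rw [pow_succ', ContinuousLinearMap.mul_apply]
    rw [h1, pow_succ]
    calc δ ^ n * δ * ‖x‖ = δ * (δ ^ n * ‖x‖) := by ring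
      _ ≤ δ * ‖(T ^ n) x‖ := mul_le_mul_of_nonneg_left (ih x) hδ
      _ ≤ ‖T ((T ^ n) x)‖ := hb _

private lemma pow_contraction' {H : Type*} [NormedAddCommGroup H] [InnerProductSpace ℂ H]
    (T : H →L[ℂ] H) (hb : ∀ x, ‖T x‖ ≤ ‖x‖) :
    ∀ (n : ℕ) (x : H), ‖(T ^ n) x‖ ≤ ‖x‖ := by
  intro n
  induction n with
  | zero => intro x; simp
  | succ n ih =>
    intro x
    have h1 : (T ^ (n + 1)) x = T ((T ^ n) x) := by
      rw [pow_succ', ContinuousLinearMap.mul_apply]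
    rw [h1]
    exact le_trans (hb _) (ih x)

private lemma lp_single_add' {W : Type*} [NormedAddCommGroup W] [InnerProductSpace ℂ W]
    (n : ℕ) (a b : W) :
    (lp.single 2 n (a + b) : lp (fun _ : ℕ => W) 2) = lp.single 2 n a + lp.single 2 n b := by
  apply lp.ext
  funext j
  rw [lp.coeFn_add, Pi.add_apply]
  by_cases h : j = n
  · subst h
    rw [lp.single_apply_self, lp.single_apply_self, lp.single_apply_self]
  · rw [lp.single_apply_ne _ _ _ h, lp.single_apply_ne _ _ _ h, lp.single_apply_ne _ _ _ h,
      add_zero]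

end AuxStmt5

private lemma isShift_of_model {H : Type*} [NormedAddCommGroup H] [InnerProductSpace ℂ H]
    [CompleteSpace H] (T : H →L[ℂ] H)
    {WS : Type*} [NormedAddCommGroup WS] [InnerProductSpace ℂ WS] [CompleteSpace WS]
    (Tseq : ℕ → (WS →L[ℂ] WS)) (hunit : ∀ n, IsUnit (Tseq n))
    (S : lp (fun _ : ℕ => WS) 2 →L[ℂ] lp (fun _ : ℕ => WS) 2)
    (U : H ≃ₗᵢ[ℂ] lp (fun _ : ℕ => WS) 2)
    (hS : ∀ n x, S (lp.single 2 n x) = lp.single 2 (n + 1) (Tseq n x))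
    (hU : ∀ x, U (T x) = S (U x)) : IsShift T := by
  classical
  have hUi : ∀ (i : ℕ) (z : H), U ((T ^ i) z) = (S ^ i) (U z) := by
    intro i
    induction i with
    | zero => intro z; simp
    | succ i ih =>
      intro z
      rw [pow_succ' T i, ContinuousLinearMap.mul_apply, hU, ih, pow_succ' S i,
        ContinuousLinearMap.mul_apply]
  let P : ℕ → WS → WS := fun i => Nat.rec id (fun i Pi => ⇑(Tseq i) ∘ Pi) i
  have hP0 : ∀ a, P 0 a = a := fun a => rfl
  have hPsucc : ∀ i a, P (i + 1) a = Tseq i (P i a) := fun i a => rfl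
  have hPS : ∀ (i : ℕ) (a : WS),
      (S ^ i) (lp.single 2 0 a) = lp.single 2 i (P i a) := by
    intro i
    induction i with
    | zero => intro a; simp [hP0]
    | succ i ih =>
      intro a
      rw [pow_succ' S i, ContinuousLinearMap.mul_apply, ih, hS, hPsucc]
  have hPsurj : ∀ i, Function.Surjective (P i) := by
    intro i
    induction i with
    | zero => exact fun a => ⟨a, rfl⟩
    | succ i ih =>
      have hsurj : Function.Surjective ⇑(Tseq i) := by
        obtain ⟨u, hu⟩ := hunit i
        intro y
        refine ⟨(↑u⁻¹ : WS →L[ℂ] WS) y, ?_⟩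
        have hmul : (Tseq i) * (↑u⁻¹ : WS →L[ℂ] WS) = 1 := by
          rw [← hu]; exact u.mul_inv
        calc (Tseq i) ((↑u⁻¹ : WS →L[ℂ] WS) y)
            = ((Tseq i) * (↑u⁻¹ : WS →L[ℂ] WS)) y := rfl
          _ = y := by rw [hmul]; rfl
      intro y
      obtain ⟨z, hz⟩ := hsurj y
      obtain ⟨a, ha⟩ := ih z
      exact ⟨a, by rw [hPsucc, ha, hz]⟩
  let L0 : WS →ₗᵢ[ℂ] H :=
    { toFun := fun x => U.symm (lp.single 2 0 x)
      map_add' := fun a b => by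
        show U.symm (lp.single 2 0 (a + b)) = U.symm (lp.single 2 0 a) + U.symm (lp.single 2 0 b)
        rw [lp_single_add', map_add]
      map_smul' := fun c a => by
        show U.symm (lp.single 2 0 (c • a)) = c • U.symm (lp.single 2 0 a)
        rw [lp.single_smul, map_smul]
      norm_map' := fun x => by
        show ‖U.symm (lp.single 2 0 x)‖ = ‖x‖
        rw [U.symm.norm_map]
        exact lp.norm_single (E := fun _ : ℕ => WS) (p := 2) (by norm_num) 0 x }
  have hL0 : ∀ a, L0.toLinearMap a = U.symm (lp.single 2 0 a) := fun _ => rfl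
  have hkey : ∀ (i : ℕ) (a : WS),
      (T ^ i) (L0.toLinearMap a) = U.symm (lp.single 2 i (P i a)) := by
    intro i a
    apply U.injective
    rw [U.apply_symm_apply]
    calc U ((T ^ i) (L0.toLinearMap a)) = (S ^ i) (U (U.symm (lp.single 2 0 a))) := hUi i _
      _ = lp.single 2 i (P i a) := by rw [U.apply_symm_apply, hPS]
  refine ⟨LinearMap.range L0.toLinearMap, ?_, ?_, ?_⟩
  · have h1 : IsClosed (Set.range ⇑L0) := L0.isometry.isClosedEmbedding.isClosed_range
    have h2 : (LinearMap.range L0.toLinearMap : Set H) = Set.range ⇑L0 := by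
      rw [LinearMap.coe_range]; rfl
    rw [h2]; exact h1
  · intro i j hij x hx y hy
    obtain ⟨a, rfl⟩ := hx
    obtain ⟨b, rfl⟩ := hy
    rw [hkey i a, hkey j b, U.symm.inner_map_map, lp.inner_single_left,
      lp.single_apply_ne _ _ _ hij, inner_zero_right]
  · rw [Submodule.topologicalClosure_eq_top_iff, Submodule.eq_bot_iff]
    intro z hz
    rw [Submodule.mem_orthogonal] at hz
    have hzi : ∀ (i : ℕ) (v : WS),
        (inner ℂ (lp.single 2 i v : lp (fun _ : ℕ => WS) 2) (U z) : ℂ) = 0 := by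
      intro i v
      obtain ⟨a, ha⟩ := hPsurj i v
      have hmem : (T ^ i) (L0.toLinearMap a) ∈
          (⨆ n : ℕ, (LinearMap.range L0.toLinearMap).map (T ^ n).toLinearMap) := by
        apply Submodule.mem_iSup_of_mem i
        exact Submodule.mem_map_of_mem (LinearMap.mem_range_self _ a)
      have h0 := hz _ hmem
      rw [hkey i a] at h0
      have h1 : z = U.symm (U z) := (U.symm_apply_apply z).symm
      rw [h1, U.symm.inner_map_map, ha] at h0
      exact h0
    have hUz : U z = 0 := by
      apply lp.ext
      funext i
      have h2 := hzi i ((U z) i)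
      rw [lp.inner_single_left] at h2
      have h3 : ((U z) i : WS) = 0 := inner_self_eq_zero.mp h2
      rw [h3]
      simp
    calc z = U.symm (U z) := (U.symm_apply_apply z).symm
      _ = U.symm 0 := by rw [hUz]
      _ = 0 := map_zero _

/-- Analytic model for a near-isometry: a near-isometry `T` on `H` is a shift
operator iff it is unitarily equivalent to an operator-valued weighted shift `S`
on the `ker T*`-valued Hardy space (modelled as `ℓ²(ℕ, ker T*)`) whose weights are
invertible contractions on `ker T*`, uniformly bounded below. -/
theorem stmt5 {H : Type*} [NormedAddCommGroup H] [InnerProductSpace ℂ H] [CompleteSpace H]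
    (T : H →L[ℂ] H) (hT : IsNearIsometry T)
    [CompleteSpace (LinearMap.ker (adjoint T).toLinearMap)] :
    IsShift T ↔
      ∃ (Tseq : ℕ → (↥(LinearMap.ker (adjoint T).toLinearMap) →L[ℂ] ↥(LinearMap.ker (adjoint T).toLinearMap)))
        (c : ℝ), 0 < c ∧ (∀ n, IsUnit (Tseq n)) ∧
        (∀ (n : ℕ) (x : ↥(LinearMap.ker (adjoint T).toLinearMap)),
          c * ‖x‖ ≤ ‖Tseq n x‖ ∧ ‖Tseq n x‖ ≤ ‖x‖) ∧
        ∃ (S : lp (fun _ : ℕ => ↥(LinearMap.ker (adjoint T).toLinearMap)) 2 →L[ℂ]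
              lp (fun _ : ℕ => ↥(LinearMap.ker (adjoint T).toLinearMap)) 2)
          (U : H ≃ₗᵢ[ℂ] lp (fun _ : ℕ => ↥(LinearMap.ker (adjoint T).toLinearMap)) 2),
          (∀ (n : ℕ) (x : ↥(LinearMap.ker (adjoint T).toLinearMap)),
            S (lp.single 2 n x) = lp.single 2 (n + 1) (Tseq n x)) ∧
          ∀ x : H, U (T x) = S (U x) := by
  classical
  obtain ⟨⟨δ, hδ, hb⟩, -⟩ := hT
  have hb1 : ∀ x, δ * ‖x‖ ≤ ‖T x‖ := fun x => (hb x).1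
  have hb2 : ∀ x, ‖T x‖ ≤ ‖x‖ := fun x => (hb x).2
  constructor
  · rintro ⟨W₀, hW₀closed, hortho, hdense⟩
    -- Step 1: the wandering subspace is `ker T†`
    have hW₀ : W₀ = LinearMap.ker (adjoint T).toLinearMap := by
      haveI : CompleteSpace ↥W₀ := hW₀closed.completeSpace_coe
      apply le_antisymm
      · intro u hu
        rw [LinearMap.mem_ker]
        have hM : ∀ z : H, (inner ℂ u (T z) : ℂ) = 0 := by
          set M : Submodule ℂ H := LinearMap.ker ((innerSL ℂ u).comp T : H →ₗ[ℂ] ℂ) with hMdef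
          have hMclosed : IsClosed (M : Set H) := ContinuousLinearMap.isClosed_ker _
          have hle : ∀ n : ℕ, W₀.map (T ^ n).toLinearMap ≤ M := by
            rintro n _ ⟨y, hy, rfl⟩
            rw [hMdef, LinearMap.mem_ker]
            show innerSL ℂ u (T ((T ^ n) y)) = 0
            have h1 : T ((T ^ n) y) = (T ^ (n + 1)) y := by
              rw [pow_succ' T n, ContinuousLinearMap.mul_apply]
            rw [innerSL_apply_apply, h1]
            have h2 := hortho 0 (n + 1) (by omega) u hu y hy
            simpa using h2
          have htop : M = ⊤ := by
            rw [eq_top_iff, ← hdense]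
            exact Submodule.topologicalClosure_minimal _ (iSup_le hle) hMclosed
          intro z
          have hz : z ∈ M := htop ▸ Submodule.mem_top
          rw [hMdef, LinearMap.mem_ker] at hz
          exact hz
        have h2 : (inner ℂ (adjoint T u) (adjoint T u) : ℂ) = 0 := by
          rw [adjoint_inner_left]
          exact hM _
        exact inner_self_eq_zero.mp h2
      · intro u hu
        rw [LinearMap.mem_ker] at hu
        set w : H := W₀.starProjection u with hwdef
        have hw : w ∈ W₀ := W₀.starProjection_apply_mem u
        have hv : u - w ∈ W₀ᗮ := W₀.sub_starProjection_mem_orthogonal u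
        have hvo : u - w ∈ (⨆ n : ℕ, W₀.map (T ^ n).toLinearMap)ᗮ := by
          rw [Submodule.mem_orthogonal]
          intro y hy
          refine Submodule.iSup_induction (motive := fun y => (inner ℂ y (u - w) : ℂ) = 0)
            _ hy ?_ ?_ ?_
          · rintro n _ ⟨y', hy', rfl⟩
            rw [ContinuousLinearMap.coe_coe]
            rcases n with _ | m
            · have h0 : ((T : H →L[ℂ] H) ^ 0) y' = y' := by
                rw [pow_zero, ContinuousLinearMap.one_apply]
              rw [h0]
              exact (Submodule.mem_orthogonal W₀ _).mp hv y' hy'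
            · rw [inner_sub_right]
              have e1 : (inner ℂ ((T ^ (m + 1)) y') u : ℂ) = 0 := by
                have h1 : (T ^ (m + 1)) y' = T ((T ^ m) y') := by
                  rw [pow_succ' T m, ContinuousLinearMap.mul_apply]
                rw [h1, ← adjoint_inner_right, (by exact hu : adjoint T u = 0), inner_zero_right]
              have e2 : (inner ℂ ((T ^ (m + 1)) y') w : ℂ) = 0 := by
                have := hortho (m + 1) 0 (Nat.succ_ne_zero m) y' hy' w hw
                simpa using this
              rw [e1, e2, sub_zero]
          · exact inner_zero_left _
          · intro x y hx hy
            rw [inner_add_left, hx, hy, add_zero]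
        have hbot : (⨆ n : ℕ, W₀.map (T ^ n).toLinearMap)ᗮ = ⊥ :=
          Submodule.topologicalClosure_eq_top_iff.mp hdense
        rw [hbot, Submodule.mem_bot] at hvo
        have huw : u = w := by rwa [sub_eq_zero] at hvo
        rw [huw]
        exact hw
    subst hW₀
    set K : Submodule ℂ H := LinearMap.ker (adjoint T).toLinearMap with hKdef
    let C : ℕ → (↥K →L[ℂ] H) := fun n => (T ^ n).comp K.subtypeL
    have hCapp : ∀ n (x : ↥K), C n x = (T ^ n) ↑x := fun n x => rfl
    have hClow : ∀ n (x : ↥K), δ ^ n * ‖x‖ ≤ ‖C n x‖ := by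
      intro n x
      exact pow_bddBelow' T hδ.le hb1 n ↑x
    choose A D V hVC hAD hDA hAnorm hAu hDu hVrange using
      fun n => exists_isometry_of_bddBelow (C n) (pow_pos hδ n) (fun x => hClow n x)
    have hOrth : OrthogonalFamily ℂ (fun _ : ℕ => ↥K) V := by
      intro i j hij v w
      rw [hVC i v, hVC j w]
      exact hortho i j hij _ (D i v).2 _ (D j w).2
    have hrange : ∀ n, LinearMap.range (V n).toLinearMap = K.map (T ^ n).toLinearMap := by
      intro n
      ext z
      simp only [LinearMap.mem_range, Submodule.mem_map]
      constructor
      · rintro ⟨a, rfl⟩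
        refine ⟨↑(D n a), (D n a).2, ?_⟩
        show (T ^ n) ↑(D n a) = V n a
        rw [hVC]
        rfl
      · rintro ⟨y, hy, rfl⟩
        refine ⟨A n ⟨y, hy⟩, ?_⟩
        show V n (A n ⟨y, hy⟩) = (T ^ n) y
        rw [hVC, hDA]
        rfl
    have htotal : ⊤ ≤ (⨆ n, LinearMap.range (V n).toLinearMap).topologicalClosure := by
      have he : (⨆ n, LinearMap.range (V n).toLinearMap) = ⨆ n : ℕ, K.map (T ^ n).toLinearMap :=
        iSup_congr hrange
      rw [he, hdense]
    have hsum : IsHilbertSum ℂ (fun _ : ℕ => ↥K) V := IsHilbertSum.mk hOrth htotal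
    let U : H ≃ₗᵢ[ℂ] lp (fun _ : ℕ => ↥K) 2 := hsum.linearIsometryEquiv
    have hUsymm : ∀ (n : ℕ) (x : ↥K), U.symm (lp.single 2 n x) = V n x := fun n x =>
      hsum.linearIsometryEquiv_symm_apply_single x
    let S : lp (fun _ : ℕ => ↥K) 2 →L[ℂ] lp (fun _ : ℕ => ↥K) 2 :=
      ((U.toContinuousLinearEquiv : H ≃L[ℂ] lp (fun _ : ℕ => ↥K) 2) :
          H →L[ℂ] lp (fun _ : ℕ => ↥K) 2).comp
        (T.comp ((U.symm.toContinuousLinearEquiv : lp (fun _ : ℕ => ↥K) 2 ≃L[ℂ] H) :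
          lp (fun _ : ℕ => ↥K) 2 →L[ℂ] H))
    have hSapp : ∀ f, S f = U (T (U.symm f)) := fun f => rfl
    refine ⟨fun n => (A (n + 1)).comp (D n), δ, hδ, ?_, ?_, S, U, ?_, ?_⟩
    · intro n
      show IsUnit ((A (n + 1)).comp (D n))
      have h : (A (n + 1)).comp (D n) = A (n + 1) * D n := rfl
      rw [h]
      exact (hAu (n + 1)).mul (hDu n)
    · intro n x
      show δ * ‖x‖ ≤ ‖(A (n + 1)).comp (D n) x‖ ∧ ‖(A (n + 1)).comp (D n) x‖ ≤ ‖x‖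
      have h1 : ‖(A (n + 1)).comp (D n) x‖ = ‖C (n + 1) (D n x)‖ := hAnorm (n + 1) (D n x)
      have h2 : C (n + 1) (D n x) = T (C n (D n x)) := by
        rw [hCapp, hCapp, pow_succ' T n, ContinuousLinearMap.mul_apply]
      have h3 : ‖C n (D n x)‖ = ‖x‖ := by rw [← hAnorm n (D n x), hAD n x]
      constructor
      · rw [h1, h2]
        calc δ * ‖x‖ = δ * ‖C n (D n x)‖ := by rw [h3]
          _ ≤ ‖T (C n (D n x))‖ := hb1 _
      · rw [h1, h2]
        calc ‖T (C n (D n x))‖ ≤ ‖C n (D n x)‖ := hb2 _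
          _ = ‖x‖ := h3
    · intro n x
      show S (lp.single 2 n x) = lp.single 2 (n + 1) ((A (n + 1)).comp (D n) x)
      rw [hSapp, hUsymm n x]
      have h2 : T (V n x) = V (n + 1) ((A (n + 1)).comp (D n) x) := by
        rw [hVC n x, hVC (n + 1)]
        show T (C n (D n x)) = C (n + 1) (D (n + 1) (A (n + 1) (D n x)))
        rw [hDA (n + 1)]
        rw [hCapp, hCapp, pow_succ' T n, ContinuousLinearMap.mul_apply]
      rw [h2, ← hUsymm (n + 1), U.apply_symm_apply]
    · intro x
      rw [hSapp, U.symm_apply_apply]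
  · rintro ⟨Tseq, c, hc, hunit, hbounds, S, U, hS, hU⟩
    exact isShift_of_model T Tseq hunit S U hS hU
end

section
/- Let T = (T₁,...,Tₙ) be a doubly twisted near-isometry and A ⊆ {1,...,n}. Set W_A = ∩_{i ∈ A} ker T_i*. Then for every j ∉ A: (i) W_A reduces T_j; (ii) W_A ⊖ T_j W_A = W_{A ∪ {j}}; (iii) W_A reduces every U_ij and U_ij W_A = W_A; (iv) the restriction of T_j to W_A is a near-isometry. -/
open ContinuousLinearMap

/-- `(T₁,…,Tₙ)` is a *doubly twisted near-isometry* with respect to the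
commuting family of unitaries `U i j` (with the convention `U j i = (U i j)*`):
each `T i` is a near-isometry, `T_i* T_j = U_ij* T_j T_i*`,
`T_k U_ij = U_ij T_k`, and `T_i T_j = U_ij T_j T_i` for `i < j`. -/
def IsDoublyTwisted {K : Type*} [NormedAddCommGroup K] [InnerProductSpace ℂ K]
    [CompleteSpace K] {n : ℕ} (T : Fin n → K →L[ℂ] K)
    (U : Fin n → Fin n → K →L[ℂ] K) : Prop :=
  (∀ i, IsNearIsometry (T i)) ∧
  (∀ i j, i ≠ j → U i j * adjoint (U i j) = 1 ∧ adjoint (U i j) * U i j = 1) ∧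
  (∀ i j, i < j → U j i = adjoint (U i j)) ∧
  (∀ i j k l, i ≠ j → k ≠ l → U i j * U k l = U k l * U i j) ∧
  (∀ i j, i < j → adjoint (T i) * T j = adjoint (U i j) * (T j * adjoint (T i))) ∧
  (∀ k i j, i ≠ j → T k * U i j = U i j * T k) ∧
  (∀ i j, i < j → T i * T j = U i j * (T j * T i))

/-- `W_A = ∩_{i ∈ A} ker T_i*`. -/
noncomputable def WA {K : Type*} [NormedAddCommGroup K] [InnerProductSpace ℂ K] [CompleteSpace K]
    {n : ℕ} (T : Fin n → K →L[ℂ] K) (A : Set (Fin n)) : Submodule ℂ K :=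
  ⨅ i ∈ A, LinearMap.ker (adjoint (T i) : K →ₗ[ℂ] K)

set_option maxHeartbeats 1000000 in
/-- Properties of `W_A` for a doubly twisted near-isometry: for `j ∉ A`,
(i) `W_A` reduces `T_j`; (ii) `W_A ⊖ T_j W_A = W_{A ∪ {j}}`; (iii) `W_A`
reduces every `U_{ij}` and `U_{ij} W_A = W_A`; (iv) the restriction of `T_j`
to `W_A` is a near-isometry. -/
theorem stmt12 {H : Type*} [NormedAddCommGroup H] [InnerProductSpace ℂ H] [CompleteSpace H]
    {n : ℕ} (T : Fin n → H →L[ℂ] H) (U : Fin n → Fin n → H →L[ℂ] H)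
    (h : IsDoublyTwisted T U) (A : Set (Fin n)) [CompleteSpace (WA T A)]
    (j : Fin n) (hj : j ∉ A) :
    (∀ x ∈ WA T A, T j x ∈ WA T A ∧ adjoint (T j) x ∈ WA T A) ∧
    (WA T A ⊓ ((WA T A).map (T j : H →ₗ[ℂ] H))ᗮ = WA T (A ∪ {j})) ∧
    (∀ i j' : Fin n, i ≠ j' →
      ((∀ x ∈ WA T A, U i j' x ∈ WA T A ∧ adjoint (U i j') x ∈ WA T A) ∧
        (WA T A).map (U i j' : H →ₗ[ℂ] H) = WA T A)) ∧
    (∀ S : WA T A →L[ℂ] WA T A, (∀ x : WA T A, (S x : H) = T j x) →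
      IsNearIsometry S) := by
  obtain ⟨hNI, hU, hUsym, hUcomm, hTT, hTU, hTTc⟩ := h
  -- membership criterion
  have hmem : ∀ (B : Set (Fin n)) (x : H), x ∈ WA T B ↔ ∀ i ∈ B, adjoint (T i) x = 0 := by
    intro B x
    simp [WA, Submodule.mem_iInf, LinearMap.mem_ker]
  -- injectivity of each T k
  have hTinj : ∀ k, Function.Injective (T k) := by
    intro k
    obtain ⟨δ, hδ, hb⟩ := (hNI k).1
    intro x y hxy
    have h0 : T k (x - y) = 0 := by rw [map_sub, hxy, sub_self]
    have h1 := (hb (x - y)).1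
    rw [h0, norm_zero] at h1
    have h2 : ‖x - y‖ = 0 := by nlinarith [norm_nonneg (x - y)]
    exact sub_eq_zero.mp (norm_eq_zero.mp h2)
  -- unitary inverses pointwise
  have hUinv : ∀ i j', i ≠ j' → ∀ x, adjoint (U i j') (U i j' x) = x := by
    intro i j' hne x
    have := congrArg (fun A : H →L[ℂ] H => A x) (hU i j' hne).2
    simpa [ContinuousLinearMap.mul_apply] using this
  have hUinv' : ∀ i j', i ≠ j' → ∀ x, U i j' (adjoint (U i j') x) = x := by
    intro i j' hne x
    have := congrArg (fun A : H →L[ℂ] H => A x) (hU i j' hne).1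
    simpa [ContinuousLinearMap.mul_apply] using this
  -- commutation: T k with U
  have hcomm1 : ∀ k i j', i ≠ j' → ∀ x, T k (U i j' x) = U i j' (T k x) := by
    intro k i j' hne x
    have := congrArg (fun A : H →L[ℂ] H => A x) (hTU k i j' hne)
    simpa [ContinuousLinearMap.mul_apply] using this
  -- commutation: adjoint T k with adjoint U
  have hcomm2 : ∀ k i j', i ≠ j' → ∀ x,
      adjoint (T k) (adjoint (U i j') x) = adjoint (U i j') (adjoint (T k) x) := by
    intro k i j' hne x
    have e := congrArg star (hTU k i j' hne)
    simp only [star_mul, ContinuousLinearMap.star_eq_adjoint] at e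
    have := congrArg (fun A : H →L[ℂ] H => A x) e
    simpa [ContinuousLinearMap.mul_apply] using this.symm
  -- commutation: adjoint T k with U
  have hcomm3 : ∀ k i j', i ≠ j' → ∀ x,
      adjoint (T k) (U i j' x) = U i j' (adjoint (T k) x) := by
    intro k i j' hne x
    calc adjoint (T k) (U i j' x)
        = U i j' (adjoint (U i j') (adjoint (T k) (U i j' x))) := (hUinv' i j' hne _).symm
      _ = U i j' (adjoint (T k) (adjoint (U i j') (U i j' x))) := by rw [hcomm2 k i j' hne]
      _ = U i j' (adjoint (T k) x) := by rw [hUinv i j' hne]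
  -- key identity: adjoint (T i) ∘ T j'
  have key1 : ∀ i j', i ≠ j' → ∀ x,
      adjoint (T i) (T j' x) = 0 ↔ adjoint (T i) x = 0 := by
    intro i j' hne x
    rcases lt_or_gt_of_ne hne with hlt | hgt
    · have e := congrArg (fun A : H →L[ℂ] H => A x) (hTT i j' hlt)
      simp only [ContinuousLinearMap.mul_apply] at e
      constructor
      · intro h0
        rw [h0] at e
        have e' : T j' (adjoint (T i) x) = 0 := by
          have := congrArg (U i j') e.symm
          rwa [hUinv' i j' hne, map_zero] at this
        have := hTinj j' (by rw [e', map_zero] : T j' (adjoint (T i) x) = T j' 0)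
        exact this
      · intro h0
        rw [e, h0, map_zero, map_zero]
    · -- j' < i
      have e2 := congrArg star (hTT j' i hgt)
      simp only [star_mul, ContinuousLinearMap.star_eq_adjoint, adjoint_adjoint] at e2
      have e := congrArg (fun A : H →L[ℂ] H => A x) e2
      simp only [ContinuousLinearMap.mul_apply] at e
      -- e : adjoint (T i) (T j' x) = T j' (adjoint (T i) (U j' i x))
      rw [hcomm3 i j' i hgt.ne x] at e
      constructor
      · intro h0
        rw [h0] at e
        have e' : U j' i (adjoint (T i) x) = 0 :=
          hTinj j' (by rw [← e, map_zero] : T j' (U j' i (adjoint (T i) x)) = T j' 0)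
        have := congrArg (adjoint (U j' i)) e'
        rwa [hUinv j' i hgt.ne, map_zero] at this
      · intro h0
        rw [e, h0, map_zero, map_zero]
  -- key identity: adjoint (T i) ∘ adjoint (T j')
  have key2 : ∀ i j', i ≠ j' → ∀ x, adjoint (T i) x = 0 →
      adjoint (T i) (adjoint (T j') x) = 0 := by
    intro i j' hne x hx
    rcases lt_or_gt_of_ne hne with hlt | hgt
    · have e2 := congrArg star (hTTc i j' hlt)
      simp only [star_mul, ContinuousLinearMap.star_eq_adjoint] at e2
      -- e2 : adjoint (T j') * adjoint (T i) = adjoint (T i) * adjoint (T j') * adjoint (U i j')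
      have e := congrArg (fun A : H →L[ℂ] H => A (U i j' x)) e2
      simp only [ContinuousLinearMap.mul_apply] at e
      rw [hUinv i j' hne x] at e
      rw [← e, hcomm3 i i j' hne x, hx, map_zero, map_zero]
    · have e2 := congrArg star (hTTc j' i hgt)
      simp only [star_mul, ContinuousLinearMap.star_eq_adjoint] at e2
      -- e2 : adjoint (T i) * adjoint (T j') = adjoint (T j') * adjoint (T i) * adjoint (U j' i)
      have e := congrArg (fun A : H →L[ℂ] H => A x) e2
      simp only [ContinuousLinearMap.mul_apply] at e
      rw [e, hcomm2 i j' i hgt.ne x, hx, map_zero, map_zero]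
  -- part (i)
  have part1 : ∀ x ∈ WA T A, T j x ∈ WA T A ∧ adjoint (T j) x ∈ WA T A := by
    intro x hx
    rw [hmem] at hx
    constructor
    · rw [hmem]
      intro i hi
      exact (key1 i j (fun he => hj (he ▸ hi)) x).mpr (hx i hi)
    · rw [hmem]
      intro i hi
      exact key2 i j (fun he => hj (he ▸ hi)) x (hx i hi)
  -- part (iii)
  have part3 : ∀ i j' : Fin n, i ≠ j' →
      ((∀ x ∈ WA T A, U i j' x ∈ WA T A ∧ adjoint (U i j') x ∈ WA T A) ∧
        (WA T A).map (U i j' : H →ₗ[ℂ] H) = WA T A) := by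
    intro i j' hne
    have hfwd : ∀ x ∈ WA T A, U i j' x ∈ WA T A ∧ adjoint (U i j') x ∈ WA T A := by
      intro x hx
      rw [hmem] at hx
      constructor
      · rw [hmem]
        intro k hk
        rw [hcomm3 k i j' hne x, hx k hk, map_zero]
      · rw [hmem]
        intro k hk
        rw [hcomm2 k i j' hne x, hx k hk, map_zero]
    refine ⟨hfwd, le_antisymm ?_ ?_⟩
    · intro y hy
      rcases Submodule.mem_map.mp hy with ⟨x, hx, rfl⟩
      exact (hfwd x hx).1
    · intro x hx
      exact Submodule.mem_map.mpr ⟨adjoint (U i j') x, (hfwd x hx).2, hUinv' i j' hne x⟩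
  -- part (ii)
  have part2 : WA T A ⊓ ((WA T A).map (T j : H →ₗ[ℂ] H))ᗮ = WA T (A ∪ {j}) := by
    ext x
    simp only [Submodule.mem_inf, Submodule.mem_orthogonal, hmem, Set.mem_union,
      Set.mem_singleton_iff]
    constructor
    · rintro ⟨hxA, hperp⟩
      intro i hi
      rcases hi with hi | hi
      · exact hxA i hi
      · subst hi
        have hTx : adjoint (T i) x ∈ WA T A := (part1 x ((hmem A x).mpr hxA)).2
        have h0 := hperp _ (Submodule.mem_map.mpr ⟨adjoint (T i) x, hTx, rfl⟩)
        rw [ContinuousLinearMap.coe_coe, ← adjoint_inner_right (T i)] at h0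
        exact inner_self_eq_zero.mp h0
    · intro hx
      refine ⟨fun i hi => hx i (Or.inl hi), ?_⟩
      intro u hu
      rcases Submodule.mem_map.mp hu with ⟨y, hy, rfl⟩
      rw [ContinuousLinearMap.coe_coe, ← adjoint_inner_right (T j), hx j (Or.inr rfl)]
      exact inner_zero_right _
  refine ⟨part1, part2, part3, ?_⟩
  -- part (iv)
  intro S hS
  have hSadj : ∀ x : WA T A, ((adjoint S) x : H) = adjoint (T j) (x : H) := by
    intro x
    have hw : adjoint (T j) (x : H) ∈ WA T A := (part1 (x : H) x.2).2
    have heq : adjoint S x = ⟨adjoint (T j) (x : H), hw⟩ := by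
      apply ext_inner_right ℂ
      intro v
      rw [adjoint_inner_left, Submodule.coe_inner, Submodule.coe_inner, hS v]
      exact (adjoint_inner_left (T j) (v : H) (x : H)).symm
    rw [heq]
  have hSpow : ∀ (m : ℕ) (x : WA T A), ((S ^ m) x : H) = ((T j) ^ m) (x : H) := by
    intro m
    induction m with
    | zero => intro x; simp
    | succ k ih =>
      intro x
      rw [pow_succ, pow_succ, ContinuousLinearMap.mul_apply, ContinuousLinearMap.mul_apply,
        ih (S x), hS]
  have hSadjpow : ∀ (m : ℕ) (x : WA T A),
      ((adjoint S ^ m) x : H) = ((adjoint (T j)) ^ m) (x : H) := by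
    intro m
    induction m with
    | zero => intro x; simp
    | succ k ih =>
      intro x
      rw [pow_succ, pow_succ, ContinuousLinearMap.mul_apply, ContinuousLinearMap.mul_apply,
        ih ((adjoint S) x), hSadj]
  constructor
  · obtain ⟨δ, hδ, hb⟩ := (hNI j).1
    refine ⟨δ, hδ, fun x => ?_⟩
    have h1 : ‖S x‖ = ‖T j (x : H)‖ := by rw [Submodule.coe_norm, hS x]
    have h2 : ‖x‖ = ‖(x : H)‖ := Submodule.coe_norm x
    rw [h1, h2]
    exact hb (x : H)
  · intro m x
    obtain ⟨y, hy⟩ := (hNI j).2 m (x : H)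
    have hz : ((adjoint S ^ m) ((S ^ (m + 1)) x) : H)
        = ((adjoint (T j)) ^ m) (((T j) ^ (m + 1)) (x : H)) := by
      rw [hSadjpow, hSpow]
    have hyW : y ∈ WA T A := by
      rw [hmem]
      intro i hi
      have hne : i ≠ j := fun he => hj (he ▸ hi)
      apply (key1 i j hne y).mp
      rw [← hy, ← hz]
      exact (hmem A _).mp ((adjoint S ^ m) ((S ^ (m + 1)) x)).2 i hi
    refine ⟨⟨y, hyW⟩, ?_⟩
    apply Subtype.ext
    rw [hz, hy, hS]
end

section
/- Let (T₁,...,Tₙ) be a doubly twisted near-isometry. Then for every (k₁,...,kₙ) ∈ ℕ₀ⁿ, the intersection ∩_{i=1}^n T_i^{k_i}(ker T_i*) equals T₁^{k₁} ⋯ Tₙ^{kₙ}(∩_{i=1}^n ker T_i*). -/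
set_option linter.unusedSectionVars false
set_option maxHeartbeats 1600000


open ContinuousLinearMap

/-- The ordered product `T₁^{k₁} ⋯ Tₙ^{kₙ}`. -/
def opProd {K : Type*} [NormedAddCommGroup K] [InnerProductSpace ℂ K]
    {n : ℕ} (T : Fin n → K →L[ℂ] K) (k : Fin n → ℕ) : K →L[ℂ] K :=
  (List.ofFn fun i => (T i) ^ (k i)).prod

section Aux

variable {H : Type*} [NormedAddCommGroup H] [InnerProductSpace ℂ H] [CompleteSpace H]

lemma DT.pow_apply_succ (A : H →L[ℂ] H) (p : ℕ) (x : H) : (A^(p+1)) x = (A^p) (A x) := by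
  rw [pow_succ]; rfl

lemma DT.inj_pow {A : H →L[ℂ] H} (h : Function.Injective A) (p : ℕ) :
    Function.Injective ⇑(A^p) := by
  induction p with
  | zero => intro x y hxy; simpa using hxy
  | succ p ih =>
      intro x y hxy
      rw [DT.pow_apply_succ, DT.pow_apply_succ] at hxy
      exact h (ih hxy)

lemma DT.inj_of_bb {A : H →L[ℂ] H} {δ : ℝ} (hδ : 0 < δ) (hb : ∀ x, δ * ‖x‖ ≤ ‖A x‖) :
    Function.Injective A := by
  intro x y hxy
  have h0 : A (x - y) = 0 := by rw [map_sub, hxy, sub_self]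
  have := hb (x - y)
  rw [h0, norm_zero] at this
  have : ‖x - y‖ = 0 := le_antisymm (by nlinarith [norm_nonneg (x - y)]) (norm_nonneg _)
  rwa [norm_sub_eq_zero_iff] at this

lemma DT.bb_pow {A : H →L[ℂ] H} {δ : ℝ} (hδ : 0 < δ) (hb : ∀ x, δ * ‖x‖ ≤ ‖A x‖) (p : ℕ) :
    ∀ x, δ ^ p * ‖x‖ ≤ ‖(A^p) x‖ := by
  induction p with
  | zero => intro x; simp
  | succ p ih =>
      intro x
      rw [DT.pow_apply_succ]
      calc δ ^ (p+1) * ‖x‖ = δ ^ p * (δ * ‖x‖) := by ring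
        _ ≤ δ ^ p * ‖A x‖ := by
            have := hb x; nlinarith [pow_pos hδ p]
        _ ≤ ‖(A^p) (A x)‖ := ih (A x)

lemma DT.closedRange_pow {A : H →L[ℂ] H} {δ : ℝ} (hδ : 0 < δ) (hb : ∀ x, δ * ‖x‖ ≤ ‖A x‖)
    (q : ℕ) : IsClosed (Set.range ⇑(A^q)) := by
  have hq : (0:ℝ) < δ ^ q := pow_pos hδ q
  have hb' : ∀ x, ‖x‖ ≤ (⟨(δ^q)⁻¹, by positivity⟩ : NNReal) * ‖(A^q) x‖ := by
    intro x
    have := DT.bb_pow hδ hb q x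
    show ‖x‖ ≤ (δ^q)⁻¹ * ‖(A^q) x‖
    calc ‖x‖ = (δ^q)⁻¹ * (δ^q * ‖x‖) := by field_simp
      _ ≤ (δ^q)⁻¹ * ‖(A^q) x‖ := by
          apply mul_le_mul_of_nonneg_left this (by positivity)
  exact ((A^q).antilipschitz_of_bound hb').isClosed_range (A^q).uniformContinuous

lemma DT.star_apply_zero_iff (A : H →L[ℂ] H) (w : H) :
    (star A) w = 0 ↔ ∀ v, (inner ℂ (A v) w : ℂ) = 0 := by
  rw [star_eq_adjoint]
  constructor
  · intro h v
    rw [← adjoint_inner_right, h, inner_zero_right]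
  · intro h
    apply ext_inner_left ℂ
    intro v
    rw [adjoint_inner_right, h, inner_zero_right]

lemma DT.sw1 {M : Type*} [Monoid M] {A B W : M} (h : A * B = W * (B * A))
    (hc : W * B = B * W) (p : ℕ) :
    A * B ^ p = W ^ p * (B ^ p * A) := by
  induction p with
  | zero => simp
  | succ p ih =>
      have hbw : B * W ^ p = W ^ p * B := ((Commute.pow_left (hc) p)).symm
      calc A * B ^ (p+1) = (A * B) * B ^ p := by rw [pow_succ']; rw [mul_assoc]
        _ = W * (B * (A * B ^ p)) := by rw [h, mul_assoc, mul_assoc]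
        _ = W * (B * (W ^ p * (B ^ p * A))) := by rw [ih]
        _ = W * ((B * W ^ p) * (B ^ p * A)) := by rw [mul_assoc]
        _ = W * ((W ^ p * B) * (B ^ p * A)) := by rw [hbw]
        _ = W ^ (p+1) * (B ^ (p+1) * A) := by
            rw [pow_succ' W, pow_succ' B]
            simp only [mul_assoc]

lemma DT.sw2 {M : Type*} [Monoid M] {A B W : M} (h : A * B = W * (B * A))
    (hc : W * A = A * W) (p : ℕ) :
    A ^ p * B = W ^ p * (B * A ^ p) := by
  induction p with
  | zero => simp
  | succ p ih =>
      have haw : A * W ^ p = W ^ p * A := ((Commute.pow_left hc p)).symm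
      calc A ^ (p+1) * B = A * (A ^ p * B) := by rw [pow_succ' A, mul_assoc]
        _ = A * (W ^ p * (B * A ^ p)) := by rw [ih]
        _ = (A * W ^ p) * (B * A ^ p) := by rw [mul_assoc]
        _ = W ^ p * (A * (B * A ^ p)) := by rw [haw, mul_assoc]
        _ = W ^ p * ((W * (B * A)) * A ^ p) := by rw [← mul_assoc A B, h, mul_assoc]
        _ = W ^ (p+1) * (B * A ^ (p+1)) := by
            rw [pow_succ W, pow_succ' A]
            simp only [mul_assoc]

lemma DT.sw3 {M : Type*} [Monoid M] {X A C : M} (h : X * A = A * (X * C))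
    (hc : C * X = X * C) (q : ℕ) :
    X ^ q * A = A * (X ^ q * C ^ q) := by
  induction q with
  | zero => simp
  | succ q ih =>
      have hcx : C * X ^ q = X ^ q * C := (Commute.pow_right hc q)
      calc X ^ (q+1) * A = X * (X ^ q * A) := by rw [pow_succ' X, mul_assoc]
        _ = X * (A * (X ^ q * C ^ q)) := by rw [ih]
        _ = (X * A) * (X ^ q * C ^ q) := by rw [mul_assoc]
        _ = A * ((X * C) * (X ^ q * C ^ q)) := by rw [h, mul_assoc]
        _ = A * (X * ((C * X ^ q) * C ^ q)) := by simp only [mul_assoc]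
        _ = A * (X * ((X ^ q * C) * C ^ q)) := by rw [hcx]
        _ = A * (X ^ (q+1) * C ^ (q+1)) := by
            rw [pow_succ' X, pow_succ' C]
            simp only [mul_assoc]

lemma DT.sw4 {M : Type*} [Monoid M] {X A C : M} (h : X * A = A * (X * C))
    (hc : C * A = A * C) (p : ℕ) :
    X * A ^ p = A ^ p * (X * C ^ p) := by
  induction p with
  | zero => simp
  | succ p ih =>
      have hca : C * A ^ p = A ^ p * C := (Commute.pow_right hc p)
      calc X * A ^ (p+1) = (X * A) * A ^ p := by rw [pow_succ' A, mul_assoc]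
        _ = A * (X * (C * A ^ p)) := by rw [h]; simp only [mul_assoc]
        _ = A * (X * (A ^ p * C)) := by rw [hca]
        _ = A * ((X * A ^ p) * C) := by simp only [mul_assoc]
        _ = A * ((A ^ p * (X * C ^ p)) * C) := by rw [ih]
        _ = A ^ (p+1) * (X * C ^ (p+1)) := by
            rw [pow_succ' A, pow_succ C]
            simp only [mul_assoc]

/-- Injective operators commuting with every `T j` and every `star (T j)`. -/
def DT.IsCtr {m : ℕ} (T : Fin m → H →L[ℂ] H) (W : H →L[ℂ] H) : Prop :=
  Function.Injective W ∧ ∀ j, W * T j = T j * W ∧ W * star (T j) = star (T j) * W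

lemma DT.IsCtr.one {m : ℕ} {T : Fin m → H →L[ℂ] H} : DT.IsCtr T (1 : H →L[ℂ] H) := by
  refine ⟨fun x y hxy => by simpa using hxy, fun j => by simp⟩

lemma DT.IsCtr.mul {m : ℕ} {T : Fin m → H →L[ℂ] H} {W W' : H →L[ℂ] H}
    (h : DT.IsCtr T W) (h' : DT.IsCtr T W') : DT.IsCtr T (W * W') := by
  refine ⟨fun x y hxy => h'.1 (h.1 hxy), fun j => ⟨?_, ?_⟩⟩
  · rw [mul_assoc, (h'.2 j).1, ← mul_assoc, (h.2 j).1, mul_assoc]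
  · rw [mul_assoc, (h'.2 j).2, ← mul_assoc, (h.2 j).2, mul_assoc]

lemma DT.IsCtr.pow {m : ℕ} {T : Fin m → H →L[ℂ] H} {W : H →L[ℂ] H}
    (h : DT.IsCtr T W) (p : ℕ) : DT.IsCtr T (W ^ p) := by
  induction p with
  | zero => simpa [pow_zero] using (DT.IsCtr.one : DT.IsCtr T 1)
  | succ p ih => rw [pow_succ]; exact ih.mul h

lemma DT.prod_inj : ∀ l : List (H →L[ℂ] H), (∀ B ∈ l, Function.Injective B) →
    Function.Injective ⇑l.prod := by
  intro l
  induction l with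
  | nil => intro _ x y hxy; simpa using hxy
  | cons B l ih =>
      intro hB x y hxy
      rw [List.prod_cons] at hxy
      have : B (l.prod x) = B (l.prod y) := hxy
      exact ih (fun C hC => hB C (List.mem_cons_of_mem _ hC)) (hB B List.mem_cons_self this)

lemma DT.swap_prod {m : ℕ} {T : Fin m → H →L[ℂ] H} (A : H →L[ℂ] H) :
    ∀ l : List (H →L[ℂ] H),
      (∀ B ∈ l, (∃ W, DT.IsCtr T W ∧ A * B = W * (B * A)) ∧
        ∀ W, DT.IsCtr T W → W * B = B * W) →
      ∃ W, DT.IsCtr T W ∧ A * l.prod = W * (l.prod * A) := by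
  intro l
  induction l with
  | nil => intro _; exact ⟨1, DT.IsCtr.one, by simp⟩
  | cons B l ih =>
      intro hl
      obtain ⟨⟨Wb, hWb, hswap⟩, hcomm⟩ := hl B List.mem_cons_self
      obtain ⟨Wl, hWl, hWlprod⟩ := ih (fun C hC => hl C (List.mem_cons_of_mem _ hC))
      refine ⟨Wb * Wl, hWb.mul hWl, ?_⟩
      have hWlB : Wl * B = B * Wl := hcomm Wl hWl
      calc A * (B :: l).prod = (A * B) * l.prod := by rw [List.prod_cons, mul_assoc]
        _ = Wb * (B * (A * l.prod)) := by rw [hswap]; simp only [mul_assoc]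
        _ = Wb * (B * (Wl * (l.prod * A))) := by rw [hWlprod]
        _ = Wb * ((B * Wl) * (l.prod * A)) := by simp only [mul_assoc]
        _ = Wb * ((Wl * B) * (l.prod * A)) := by rw [hWlB]
        _ = (Wb * Wl) * ((B :: l).prod * A) := by rw [List.prod_cons]; simp only [mul_assoc]

lemma DT.ctr_commute_prod {m : ℕ} {T : Fin m → H →L[ℂ] H} {W : H →L[ℂ] H} (hW : DT.IsCtr T W)
    (l : List (H →L[ℂ] H)) (hl : ∀ B ∈ l, ∃ j p, B = T j ^ p) :
    W * l.prod = l.prod * W := by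
  refine Commute.list_prod_right l W (fun B hB => ?_)
  obtain ⟨j, p, rfl⟩ := hl B hB
  exact Commute.pow_right ((hW.2 j).1) p

lemma DT.map_mul (A B : H →L[ℂ] H) (p : Submodule ℂ H) :
    p.map ((A * B : H →L[ℂ] H) : H →ₗ[ℂ] H) = (p.map (B : H →ₗ[ℂ] H)).map (A : H →ₗ[ℂ] H) := by
  ext x
  simp only [Submodule.mem_map, mul_apply]
  constructor
  · rintro ⟨y, hy, rfl⟩; exact ⟨B y, ⟨y, hy, rfl⟩, rfl⟩
  · rintro ⟨z, ⟨y, hy, rfl⟩, rfl⟩; exact ⟨y, hy, rfl⟩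

/-- The key one-step division lemma: if `A a ∈ B^q(ker B*)` then `a ∈ B^q(ker B*)`. -/
lemma DT.pairStep {A B V : H →L[ℂ] H}
    (hAinj : Function.Injective A) (hBinj : Function.Injective B)
    (hVinj : Function.Injective V)
    (hVB : V * B = B * V) (hVsB : V * star B = star B * V)
    (hswap : A * B = V * (B * A))
    (hadj : star B * A = A * (star B * V))
    (q : ℕ) (hBcl : IsClosed (Set.range ⇑(B ^ q))) {a : H}
    (ha : A a ∈ (LinearMap.ker ((star B : H →L[ℂ] H) : H →ₗ[ℂ] H)).map ((B ^ q : H →L[ℂ] H) : H →ₗ[ℂ] H)) :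
    a ∈ (LinearMap.ker ((star B : H →L[ℂ] H) : H →ₗ[ℂ] H)).map ((B ^ q : H →L[ℂ] H) : H →ₗ[ℂ] H) := by
  obtain ⟨b, hb0, hba⟩ := ha
  replace hba : (B ^ q) b = A a := hba
  replace hb0 : star B b = 0 := hb0
  set R : Submodule ℂ H := LinearMap.range ((B ^ q : H →L[ℂ] H) : H →ₗ[ℂ] H) with hR
  have hRcl : IsClosed (R : Set H) := by rw [hR, LinearMap.coe_range]; exact hBcl
  haveI := hRcl.completeSpace_coe
  obtain ⟨r, hr, w, hw, hrw⟩ := R.exists_add_mem_mem_orthogonal a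
  obtain ⟨c, hc⟩ := LinearMap.mem_range.mp hr
  replace hc : (B ^ q) c = r := hc
  have hsw : ((star B)^q) w = 0 := by
    have h1 : star (B ^ q) w = 0 := by
      rw [DT.star_apply_zero_iff]
      intro v
      exact (Submodule.mem_orthogonal R w).mp hw ((B^q) v) (LinearMap.mem_range_self _ v)
    rwa [star_pow] at h1
  have opAB : A * B ^ q = B ^ q * (V ^ q * A) := by
    have h2 : V ^ q * B ^ q = B ^ q * V ^ q := Commute.pow_pow hVB q q
    rw [DT.sw1 hswap hVB q, ← mul_assoc, h2, mul_assoc]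
  have e2 : A r = (B ^ q) ((V ^ q) (A c)) := by
    have := DFunLike.congr_fun opAB c
    simp only [ContinuousLinearMap.mul_apply] at this
    rw [← hc]; exact this
  have hAw : A w = (B ^ q) (b - (V ^ q) (A c)) := by
    have hw' : w = a - r := by rw [hrw]; abel
    rw [hw', map_sub, ← hba, e2, ← map_sub]
  have hsAw : ((star B)^q) (A w) = 0 := by
    have h3 := DT.sw3 hadj hVsB q
    have h4 := DFunLike.congr_fun h3 w
    simp only [ContinuousLinearMap.mul_apply] at h4
    have h5 : ((star B)^q) ((V ^ q) w) = (V ^ q) (((star B)^q) w) := by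
      have h6 := Commute.pow_pow hVsB.symm q q
      have := DFunLike.congr_fun h6 w
      simpa only [ContinuousLinearMap.mul_apply] using this
    rw [h4, h5, hsw, map_zero, map_zero]
  have hAw0 : A w = 0 := by
    have hinner : (inner ℂ (A w) (A w) : ℂ) = 0 := by
      nth_rewrite 1 [hAw]
      rw [← adjoint_inner_right, ← star_eq_adjoint, star_pow, hsAw, inner_zero_right]
    exact inner_self_eq_zero.mp hinner
  have hw0 : w = 0 := hAinj (by rw [hAw0, map_zero])
  have haR : a = (B ^ q) c := by rw [hrw, hw0, add_zero, hc]
  have hVAc : (V ^ q) (A c) = b := by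
    apply DT.inj_pow hBinj q
    rw [← e2, ← hc, ← haR, ← hba]
  have h6 : star B ((V ^ q) (A c)) = 0 := by rw [hVAc, hb0]
  have h7 : (V ^ q) (star B (A c)) = 0 := by
    have hcm : star B * V ^ q = V ^ q * star B := (Commute.pow_right hVsB.symm q)
    have := DFunLike.congr_fun hcm (A c)
    simp only [ContinuousLinearMap.mul_apply] at this
    rw [← this, h6]
  have h8 : star B (A c) = 0 := DT.inj_pow hVinj q (by rw [h7, map_zero])
  have h9 := DFunLike.congr_fun hadj c
  simp only [ContinuousLinearMap.mul_apply] at h9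
  have h10 : star B (V c) = 0 := hAinj (by rw [← h9, h8, map_zero])
  have h11 := DFunLike.congr_fun hVsB c
  simp only [ContinuousLinearMap.mul_apply] at h11
  have h12 : star B c = 0 := hVinj (by rw [h11, h10, map_zero])
  exact ⟨c, LinearMap.mem_ker.mpr h12, haR.symm⟩

end Aux

lemma DT.main {H : Type*} [NormedAddCommGroup H] [InnerProductSpace ℂ H] [CompleteSpace H] :
    ∀ (n : ℕ) (T : Fin n → H →L[ℂ] H) (U : Fin n → Fin n → H →L[ℂ] H),
      IsDoublyTwisted T U → ∀ k : Fin n → ℕ,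
      (⨅ i, (LinearMap.ker (ContinuousLinearMap.adjoint (T i) : H →ₗ[ℂ] H)).map (((T i) ^ (k i) : H →L[ℂ] H) : H →ₗ[ℂ] H)) =
        (⨅ i, LinearMap.ker (ContinuousLinearMap.adjoint (T i) : H →ₗ[ℂ] H)).map (opProd T k : H →ₗ[ℂ] H) := by
  intro n
  induction n with
  | zero =>
      intro T U h k
      rw [iInf_of_empty, iInf_of_empty]
      have hQ : opProd T k = 1 := by
        simp [opProd]
      rw [hQ]
      symm
      apply eq_top_iff.mpr
      intro x _
      exact Submodule.mem_map.mpr ⟨x, Submodule.mem_top, rfl⟩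
  | succ n IH =>
      intro T U h k
      have h1 := h.1
      have h2 : ∀ i j, i ≠ j → U i j * star (U i j) = 1 ∧ star (U i j) * U i j = 1 := by
        intro i j hij
        have := h.2.1 i j hij
        simpa only [← star_eq_adjoint] using this
      have h5 : ∀ i j, i < j → star (T i) * T j = star (U i j) * (T j * star (T i)) := by
        intro i j hij
        have := h.2.2.2.2.1 i j hij
        simpa only [← star_eq_adjoint] using this
      have h6 := h.2.2.2.2.2.1
      have h7 := h.2.2.2.2.2.2
      have hTinj : ∀ j : Fin (n+1), Function.Injective ⇑(T j) := by
        intro j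
        obtain ⟨⟨δ, hδ, hbd⟩, -⟩ := h1 j
        exact DT.inj_of_bb hδ (fun x => (hbd x).1)
      have hTcl : ∀ (j : Fin (n+1)) (q : ℕ), IsClosed (Set.range ⇑(T j ^ q)) := by
        intro j q
        obtain ⟨⟨δ, hδ, hbd⟩, -⟩ := h1 j
        exact DT.closedRange_pow hδ (fun x => (hbd x).1) q
      have hinj_of_linv : ∀ {A B : H →L[ℂ] H}, B * A = 1 → Function.Injective ⇑A := by
        intro A B hBA x y hxy
        have hx := DFunLike.congr_fun hBA x
        have hy := DFunLike.congr_fun hBA y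
        simp only [ContinuousLinearMap.mul_apply, ContinuousLinearMap.one_apply] at hx hy
        rw [← hx, ← hy, hxy]
      have hUinj : ∀ i j, i ≠ j → Function.Injective ⇑(U i j) :=
        fun i j hij => hinj_of_linv (h2 i j hij).2
      have hUsinj : ∀ i j, i ≠ j → Function.Injective ⇑(star (U i j)) :=
        fun i j hij => hinj_of_linv (h2 i j hij).1
      have hUcomm : ∀ i j kk, i ≠ j → U i j * T kk = T kk * U i j :=
        fun i j kk hij => (h6 kk i j hij).symm
      have hUstarT : ∀ i j kk, i ≠ j → star (U i j) * T kk = T kk * star (U i j) := by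
        intro i j kk hij
        calc star (U i j) * T kk
            = star (U i j) * T kk * (U i j * star (U i j)) := by rw [(h2 i j hij).1, mul_one]
          _ = star (U i j) * (T kk * U i j) * star (U i j) := by simp only [mul_assoc]
          _ = star (U i j) * (U i j * T kk) * star (U i j) := by rw [h6 kk i j hij]
          _ = (star (U i j) * U i j) * (T kk * star (U i j)) := by simp only [mul_assoc]
          _ = T kk * star (U i j) := by rw [(h2 i j hij).2, one_mul]
      have hUstarTs : ∀ i j kk, i ≠ j →
          star (U i j) * star (T kk) = star (T kk) * star (U i j) := by
        intro i j kk hij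
        simpa only [star_mul] using congrArg star (h6 kk i j hij)
      have hUTs : ∀ i j kk, i ≠ j → U i j * star (T kk) = star (T kk) * U i j := by
        intro i j kk hij
        have := congrArg star (hUstarT i j kk hij)
        simp only [star_mul, star_star] at this
        exact this.symm
      have hUctr : ∀ i j, i ≠ j → DT.IsCtr T (U i j) :=
        fun i j hij => ⟨hUinj i j hij, fun kk => ⟨hUcomm i j kk hij, hUTs i j kk hij⟩⟩
      have hUsctr : ∀ i j, i ≠ j → DT.IsCtr T (star (U i j)) :=
        fun i j hij => ⟨hUsinj i j hij, fun kk => ⟨hUstarT i j kk hij, hUstarTs i j kk hij⟩⟩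
      -- the tail tuple
      have h' : IsDoublyTwisted (fun i : Fin n => T i.succ) (fun i j => U i.succ j.succ) := by
        obtain ⟨a1, a2, a3, a4, a5, a6, a7⟩ := h
        exact ⟨fun i => a1 i.succ,
          fun i j hij => a2 _ _ (fun e => hij (Fin.succ_injective n e)),
          fun i j hij => a3 _ _ (Fin.succ_lt_succ_iff.mpr hij),
          fun i j kk l hij hkl => a4 _ _ _ _ (fun e => hij (Fin.succ_injective n e))
            (fun e => hkl (Fin.succ_injective n e)),
          fun i j hij => a5 _ _ (Fin.succ_lt_succ_iff.mpr hij),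
          fun kk i j hij => a6 _ _ _ (fun e => hij (Fin.succ_injective n e)),
          fun i j hij => a7 _ _ (Fin.succ_lt_succ_iff.mpr hij)⟩
      have IH0 := IH (fun i : Fin n => T i.succ) (fun i j => U i.succ j.succ) h'
        (fun i => k i.succ)
      have IH' : (⨅ i : Fin n, (LinearMap.ker ((star (T i.succ) : H →L[ℂ] H) : H →ₗ[ℂ] H)).map ((T i.succ ^ k i.succ : H →L[ℂ] H) : H →ₗ[ℂ] H)) =
          (⨅ i : Fin n, LinearMap.ker ((star (T i.succ) : H →L[ℂ] H) : H →ₗ[ℂ] H)).map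
            (opProd (fun i : Fin n => T i.succ) (fun i => k i.succ) : H →ₗ[ℂ] H) := by
        simpa only [← star_eq_adjoint] using IH0
      set Q : H →L[ℂ] H := opProd (fun i : Fin n => T i.succ) (fun i => k i.succ) with hQdef
      set lQ : List (H →L[ℂ] H) := List.ofFn (fun i : Fin n => T i.succ ^ k i.succ) with hlQ
      have hQl : Q = lQ.prod := by rw [hQdef, hlQ]; rfl
      have hQmem : ∀ B ∈ lQ, ∃ j p, B = T j ^ p := by
        intro B hB
        rw [hlQ, List.mem_ofFn] at hB
        obtain ⟨i, rfl⟩ := hB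
        exact ⟨i.succ, k i.succ, rfl⟩
      have hQinj : Function.Injective ⇑Q := by
        rw [hQl]
        refine DT.prod_inj lQ (fun B hB => ?_)
        obtain ⟨j, p, rfl⟩ := hQmem B hB
        exact DT.inj_pow (hTinj j) p
      have hne0 : ∀ i : Fin n, (0 : Fin (n+1)) ≠ i.succ := fun i => (Fin.succ_ne_zero i).symm
      have hlt0 : ∀ i : Fin n, (0 : Fin (n+1)) < i.succ := fun i => Fin.succ_pos i
      have rswap : ∀ i : Fin n, T 0 * T i.succ = U 0 i.succ * (T i.succ * T 0) :=
        fun i => h7 0 i.succ (hlt0 i)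
      have radj : ∀ i : Fin n,
          star (T 0) * T i.succ = star (U 0 i.succ) * (T i.succ * star (T 0)) :=
        fun i => h5 0 i.succ (hlt0 i)
      have d1 : ∀ i : Fin n,
          star (T i.succ) * T 0 = T 0 * (star (T i.succ) * U 0 i.succ) := by
        intro i
        have := congrArg star (radj i)
        simp only [star_mul, star_star, mul_assoc] at this
        simpa only [mul_assoc] using this
      have hyp2 : ∀ B ∈ lQ, (∃ W, DT.IsCtr T W ∧ star (T 0) * B = W * (B * star (T 0))) ∧
          ∀ W, DT.IsCtr T W → W * B = B * W := by
        intro B hB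
        rw [hlQ, List.mem_ofFn] at hB
        obtain ⟨i, rfl⟩ := hB
        constructor
        · refine ⟨star (U 0 i.succ) ^ k i.succ, (hUsctr 0 i.succ (hne0 i)).pow _, ?_⟩
          exact DT.sw1 (radj i) (hUstarT 0 i.succ i.succ (hne0 i)) (k i.succ)
        · intro W hW; exact Commute.pow_right ((hW.2 i.succ).1) (k i.succ)
      have fact2 : ∃ W, DT.IsCtr T W ∧ star (T 0) * Q = W * (Q * star (T 0)) := by
        rw [hQl]; exact DT.swap_prod (star (T 0)) lQ hyp2
      have hyp3 : ∀ B ∈ lQ, (∃ W, DT.IsCtr T W ∧ T 0 * B = W * (B * T 0)) ∧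
          ∀ W, DT.IsCtr T W → W * B = B * W := by
        intro B hB
        rw [hlQ, List.mem_ofFn] at hB
        obtain ⟨i, rfl⟩ := hB
        constructor
        · refine ⟨U 0 i.succ ^ k i.succ, (hUctr 0 i.succ (hne0 i)).pow _, ?_⟩
          exact DT.sw1 (rswap i) (hUcomm 0 i.succ i.succ (hne0 i)) (k i.succ)
        · intro W hW; exact Commute.pow_right ((hW.2 i.succ).1) (k i.succ)
      have fact3 : ∃ W, DT.IsCtr T W ∧ T 0 ^ k 0 * Q = W * (Q * T 0 ^ k 0) := by
        obtain ⟨W0, hW0, e0⟩ : ∃ W, DT.IsCtr T W ∧ T 0 * Q = W * (Q * T 0) := by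
          rw [hQl]; exact DT.swap_prod (T 0) lQ hyp3
        exact ⟨W0 ^ k 0, hW0.pow _, DT.sw2 e0 ((hW0.2 0).1) (k 0)⟩
      have fact5 : ∀ (i : Fin n) (p : ℕ) (c : H), star (T i.succ) c = 0 →
          star (T i.succ) ((T 0 ^ p) c) = 0 := by
        intro i p c hc
        have hop := DT.sw4 (d1 i) (hUcomm 0 i.succ 0 (hne0 i)) p
        have hv := DFunLike.congr_fun hop c
        simp only [ContinuousLinearMap.mul_apply] at hv
        rw [hv]
        have hcm : star (T i.succ) * U 0 i.succ ^ p = U 0 i.succ ^ p * star (T i.succ) :=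
          Commute.pow_right ((hUTs 0 i.succ i.succ (hne0 i)).symm) p
        have h9 := DFunLike.congr_fun hcm c
        simp only [ContinuousLinearMap.mul_apply] at h9
        rw [h9, hc, map_zero, map_zero]
      have F1 : opProd T k = T 0 ^ k 0 * Q := by
        rw [hQdef]
        show (List.ofFn fun i : Fin (n+1) => T i ^ k i).prod = _
        rw [List.ofFn_succ, List.prod_cons]
        rfl
      simp only [← star_eq_adjoint]
      apply le_antisymm
      · intro x hx
        rw [Submodule.mem_iInf] at hx
        obtain ⟨a, ha0, hax⟩ := hx 0
        replace ha0 : star (T 0) a = 0 := ha0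
        replace hax : (T 0 ^ k 0) a = x := hax
        have hpeel : ∀ i : Fin n,
            a ∈ (LinearMap.ker ((star (T i.succ) : H →L[ℂ] H) : H →ₗ[ℂ] H)).map ((T i.succ ^ k i.succ : H →L[ℂ] H) : H →ₗ[ℂ] H) := by
          intro i
          have step : ∀ (p : ℕ) (v : H),
              (T 0 ^ p) v ∈ (LinearMap.ker ((star (T i.succ) : H →L[ℂ] H) : H →ₗ[ℂ] H)).map ((T i.succ ^ k i.succ : H →L[ℂ] H) : H →ₗ[ℂ] H) →
              v ∈ (LinearMap.ker ((star (T i.succ) : H →L[ℂ] H) : H →ₗ[ℂ] H)).map ((T i.succ ^ k i.succ : H →L[ℂ] H) : H →ₗ[ℂ] H) := by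
            intro p
            induction p with
            | zero => intro v hv; simpa using hv
            | succ p ih =>
                intro v hv
                rw [DT.pow_apply_succ] at hv
                have hv' := ih (T 0 v) hv
                exact DT.pairStep (hTinj 0) (hTinj i.succ) (hUinj 0 i.succ (hne0 i))
                  (hUcomm 0 i.succ i.succ (hne0 i)) (hUTs 0 i.succ i.succ (hne0 i))
                  (rswap i) (d1 i) (k i.succ) (hTcl i.succ (k i.succ)) hv'
          refine step (k 0) a ?_
          rw [hax]
          exact hx i.succ
        have haQ : a ∈ (⨅ i : Fin n, LinearMap.ker ((star (T i.succ) : H →L[ℂ] H) : H →ₗ[ℂ] H)).map (Q : H →ₗ[ℂ] H) := by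
          rw [← IH', Submodule.mem_iInf]
          exact hpeel
        obtain ⟨c, hcK, hca⟩ := haQ
        replace hca : Q c = a := hca
        replace hcK : c ∈ ⨅ i : Fin n, LinearMap.ker ((star (T i.succ) : H →L[ℂ] H) : H →ₗ[ℂ] H) := hcK
        obtain ⟨W2, hW2, e2⟩ := fact2
        have hc0 : star (T 0) c = 0 := by
          have e2c := DFunLike.congr_fun e2 c
          simp only [ContinuousLinearMap.mul_apply] at e2c
          have hz : W2 (Q (star (T 0) c)) = 0 := by rw [← e2c, hca, ha0]
          have hz2 : Q (star (T 0) c) = 0 := hW2.1 (by rw [hz, map_zero])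
          exact hQinj (by rw [hz2, map_zero])
        refine Submodule.mem_map.mpr ⟨c, ?_, ?_⟩
        · rw [Submodule.mem_iInf]
          intro i
          refine Fin.cases ?_ (fun i' => ?_) i
          · exact LinearMap.mem_ker.mpr hc0
          · exact (Submodule.mem_iInf _).mp hcK i'
        · rw [F1]
          show (T 0 ^ k 0) (Q c) = x
          rw [hca]
          exact hax
      · intro x hx
        obtain ⟨c, hcK, hcx⟩ := hx
        replace hcK : c ∈ ⨅ i : Fin (n+1), LinearMap.ker ((star (T i) : H →L[ℂ] H) : H →ₗ[ℂ] H) := hcK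
        rw [Submodule.mem_iInf] at hcK
        have hc0 : star (T 0) c = 0 := hcK 0
        have hcs : ∀ i : Fin n, star (T i.succ) c = 0 := fun i => hcK i.succ
        have hxval : (T 0 ^ k 0) (Q c) = x := by
          rw [← hcx, F1]; rfl
        rw [Submodule.mem_iInf]
        intro i
        refine Fin.cases ?_ (fun i' => ?_) i
        · refine Submodule.mem_map.mpr ⟨Q c, ?_, hxval⟩
          obtain ⟨W2, hW2, e2⟩ := fact2
          have e2c := DFunLike.congr_fun e2 c
          simp only [ContinuousLinearMap.mul_apply] at e2c
          refine LinearMap.mem_ker.mpr ?_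
          show (star (T 0)) (Q c) = 0
          rw [e2c, hc0, map_zero, map_zero]
        · obtain ⟨W3, hW3, e3⟩ := fact3
          have hxQ : x ∈ (⨅ i : Fin n, LinearMap.ker ((star (T i.succ) : H →L[ℂ] H) : H →ₗ[ℂ] H)).map (Q : H →ₗ[ℂ] H) := by
            have e3c := DFunLike.congr_fun e3 c
            simp only [ContinuousLinearMap.mul_apply] at e3c
            have hWQ : W3 * Q = Q * W3 := by
              rw [hQl]; exact DT.ctr_commute_prod hW3 lQ hQmem
            have hWQc := DFunLike.congr_fun hWQ ((T 0 ^ k 0) c)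
            simp only [ContinuousLinearMap.mul_apply] at hWQc
            refine Submodule.mem_map.mpr ⟨W3 ((T 0 ^ k 0) c), ?_, ?_⟩
            · rw [Submodule.mem_iInf]
              intro i''
              refine LinearMap.mem_ker.mpr ?_
              show (star (T i''.succ)) (W3 ((T 0 ^ k 0) c)) = 0
              have hcomm := (hW3.2 i''.succ).2
              have hcc := DFunLike.congr_fun hcomm ((T 0 ^ k 0) c)
              simp only [ContinuousLinearMap.mul_apply] at hcc
              rw [← hcc, fact5 i'' (k 0) c (hcs i''), map_zero]
            · show Q (W3 ((T 0 ^ k 0) c)) = x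
              rw [← hxval, e3c, hWQc]
          rw [← IH'] at hxQ
          exact (Submodule.mem_iInf _).mp hxQ i'

/-- For a doubly twisted near-isometry `(T₁,…,Tₙ)` and any multi-index
`(k₁,…,kₙ)`, `∩ᵢ T_i^{kᵢ}(ker T_i*) = T₁^{k₁} ⋯ Tₙ^{kₙ}(∩ᵢ ker T_i*)`. -/
theorem stmt16 {H : Type*} [NormedAddCommGroup H] [InnerProductSpace ℂ H] [CompleteSpace H]
    {n : ℕ} (T : Fin n → H →L[ℂ] H) (U : Fin n → Fin n → H →L[ℂ] H)
    (h : IsDoublyTwisted T U) (k : Fin n → ℕ) :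
    (⨅ i, (LinearMap.ker (adjoint (T i) : H →ₗ[ℂ] H)).map (((T i) ^ (k i) : H →L[ℂ] H) : H →ₗ[ℂ] H)) =
      (⨅ i, LinearMap.ker (adjoint (T i) : H →ₗ[ℂ] H)).map (opProd T k : H →ₗ[ℂ] H) := by
  exact DT.main n T U h k
end
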